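/- arXiv:0801.1364 — 3 statements merged into one kernel-verified Lean document; each statement's English description precedes it below -/
import Mathlib

section
/- Let y ∈ ℝ^{n+1} and k ∈ ℤ^{n+1}, and suppose x = Q k is a closest point in A_n* to y. Then there exists λ ∈ ℝ such that k is a closest point in ℤ^{n+1} to y + λ·1, i.e., ‖y + λ·1 − k‖ ≤ ‖y + λ·1 − k'‖ for every k' ∈ ℤ^{n+1}. (Indeed λ = (Σ_j (k_j − y_j))/(n+1) works.) -/
/-- The orthogonal projection onto the hyperplane orthogonal to the all-ones
vector: `(Q x) i = x i - (∑ j, x j) / (n+1)`. -/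
noncomputable def Q {n : ℕ} (x : EuclideanSpace ℝ (Fin (n+1))) :
    EuclideanSpace ℝ (Fin (n+1)) :=
  WithLp.toLp 2 (fun i => x i - (∑ j, x j) / (n+1))

/-- An integer vector viewed as a point of `ℝ^{n+1}`. -/
def intVec {n : ℕ} (k : Fin (n+1) → ℤ) : EuclideanSpace ℝ (Fin (n+1)) :=
  WithLp.toLp 2 (fun i => (k i : ℝ))

/-- The all-ones vector in `ℝ^{n+1}`. -/
def ones {n : ℕ} : EuclideanSpace ℝ (Fin (n+1)) := WithLp.toLp 2 (fun _ => 1)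

/-- The lattice `A_n*`: the image under `Q` of the integer vectors in `ℝ^{n+1}`. -/
noncomputable def Anstar (n : ℕ) : Set (EuclideanSpace ℝ (Fin (n+1))) :=
  { x | ∃ k : Fin (n+1) → ℤ, x = Q (WithLp.toLp 2 (fun i => (k i : ℝ))) }

lemma norm_le_iff_sum_sq {n : ℕ} (x w : EuclideanSpace ℝ (Fin (n+1))) :
    ‖x‖ ≤ ‖w‖ ↔ ∑ i, (x i)^2 ≤ ∑ i, (w i)^2 := by
  rw [EuclideanSpace.norm_eq, EuclideanSpace.norm_eq,
    Real.sqrt_le_sqrt_iff (by positivity)]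
  simp [Real.norm_eq_abs, sq_abs]

lemma sum_sq_add_const {n : ℕ} (a : Fin (n+1) → ℝ) (c : ℝ) (ha : ∑ i, a i = 0) :
    ∑ i, (a i + c)^2 = (∑ i, (a i)^2) + (n+1)*c^2 := by
  have h : ∀ i ∈ Finset.univ, (a i + c)^2 = (a i)^2 + (2*c)*(a i) + c^2 :=
    fun i _ => by ring
  rw [Finset.sum_congr rfl h]
  simp [Finset.sum_add_distrib, ← Finset.mul_sum, ha, Finset.card_univ]


/-- If `x = Q k` is a closest point in `A_n*` to `y`, then there exists `λ ∈ ℝ`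
such that `k` is a closest point in `ℤ^{n+1}` to `y + λ·1`. -/
theorem exists_lambda_closest_int (n : ℕ) (y : EuclideanSpace ℝ (Fin (n+1)))
    (k : Fin (n+1) → ℤ)
    (hclosest : ∀ w ∈ Anstar n, ‖y - Q (intVec k)‖ ≤ ‖y - w‖) :
    ∃ lam : ℝ, ∀ k' : Fin (n+1) → ℤ,
      ‖y + lam • ones - intVec k‖ ≤ ‖y + lam • ones - intVec k'‖ := by
  classical
  have hn : ((n:ℝ)+1) ≠ 0 := by positivity
  set sy : ℝ := ∑ j, y j with hsy
  set lam : ℝ := ((∑ j, ((k j : ℝ))) - sy)/(n+1) with hlam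
  refine ⟨lam, fun k' => ?_⟩
  -- the "hyperplane part" of y - Q k''
  set a : (Fin (n+1) → ℤ) → (Fin (n+1) → ℝ) :=
    fun k'' i => y i - (k'' i : ℝ) - (sy - ∑ j, ((k'' j : ℝ)))/(n+1) with ha
  have hsum : ∀ k'' : Fin (n+1) → ℤ, ∑ i, a k'' i = 0 := by
    intro k''
    simp only [ha, Finset.sum_sub_distrib, Finset.sum_const, Finset.card_univ,
      Fintype.card_fin, nsmul_eq_mul]
    push_cast
    field_simp
    rw [hsy]; ring
  -- Fact A
  have factA : ∀ k'' : Fin (n+1) → ℤ,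
      ∑ i, ((y - Q (intVec k'')) i)^2
        = (∑ i, (a k'' i)^2) + (n+1)*(sy/(n+1))^2 := by
    intro k''
    rw [← sum_sq_add_const (a k'') (sy/(n+1)) (hsum k'')]
    apply Finset.sum_congr rfl
    intro i _
    have : (y - Q (intVec k'')) i = a k'' i + sy/(n+1) := by
      simp only [PiLp.sub_apply, Q, intVec, PiLp.toLp_apply, ha]
      field_simp
      ring
    rw [this]
  -- Fact B
  have factB : ∀ k'' : Fin (n+1) → ℤ,
      ∑ i, (((y + lam • ones - intVec k'' : EuclideanSpace ℝ (Fin (n+1))) i))^2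
        = (∑ i, (a k'' i)^2)
          + (n+1)*(lam + (sy - ∑ j, ((k'' j : ℝ)))/(n+1))^2 := by
    intro k''
    rw [← sum_sq_add_const (a k'') _ (hsum k'')]
    apply Finset.sum_congr rfl
    intro i _
    have : ((y + lam • ones - intVec k'' : EuclideanSpace ℝ (Fin (n+1))) i)
        = a k'' i + (lam + (sy - ∑ j, ((k'' j : ℝ)))/(n+1)) := by
      simp only [PiLp.sub_apply, PiLp.add_apply, PiLp.smul_apply, ones, intVec, PiLp.toLp_apply,
        smul_eq_mul, mul_one, ha]
      ring
    rw [this]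
  have hmem : Q (intVec k') ∈ Anstar n := ⟨k', rfl⟩
  have hc := (norm_le_iff_sum_sq _ _).mp (hclosest _ hmem)
  rw [factA k, factA k'] at hc
  have hcore : ∑ i, (a k i)^2 ≤ ∑ i, (a k' i)^2 := by linarith
  rw [norm_le_iff_sum_sq, factB k, factB k']
  have hzero : lam + (sy - ∑ j, ((k j : ℝ)))/(n+1) = 0 := by
    rw [hlam]; field_simp
    ring
  rw [hzero]
  nlinarith [sq_nonneg (lam + (sy - ∑ j, ((k' j : ℝ)))/(n+1)), sq_nonneg ((n:ℝ)+1)]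
end

section
/- For every y ∈ ℝ^{n+1} there exists λ ∈ [0, 1) such that Q⌊y + λ·1⌉ is a closest point in A_n* to y, i.e., ‖y − Q⌊y + λ·1⌉‖ ≤ ‖y − w‖ for every w ∈ A_n*. -/
/-- Componentwise nearest-integer rounding of a vector (viewed in `ℝ^{n+1}`). -/
noncomputable def roundVec {n : ℕ} (y : EuclideanSpace ℝ (Fin (n+1))) :
    EuclideanSpace ℝ (Fin (n+1)) :=
  WithLp.toLp 2 (fun i => (round (y i) : ℝ))

section Aux
open RealInnerProductSpace
variable {n : ℕ}

@[simp] lemma ones_apply (i : Fin (n+1)) : (ones (n := n)) i = 1 := rfl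

lemma smul_ones_apply (c : ℝ) (i : Fin (n+1)) : (c • (ones (n := n))) i = c := by
  simp [ones]

lemma add_smul_ones_apply (x : EuclideanSpace ℝ (Fin (n+1))) (c : ℝ) (i : Fin (n+1)) :
    (x + c • (ones (n := n))) i = x i + c := by
  simp [ones]

lemma sum_Q (x : EuclideanSpace ℝ (Fin (n+1))) : ∑ i, Q x i = 0 := by
  have : (((n : ℝ) + 1)) ≠ 0 := by positivity
  simp only [Q, Finset.sum_sub_distrib, Finset.sum_const, Finset.card_univ, Fintype.card_fin,
    nsmul_eq_mul]
  push_cast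
  field_simp
  ring

lemma Q_add_smul_ones (x : EuclideanSpace ℝ (Fin (n+1))) (c : ℝ) :
    Q (x + c • ones) = Q x := by
  have hne : (((n : ℝ) + 1)) ≠ 0 := by positivity
  ext i
  have hsum : ∑ j, (x + c • (ones (n := n))) j = (∑ j, x j) + ((n : ℝ)+1) * c := by
    simp only [add_smul_ones_apply, Finset.sum_add_distrib, Finset.sum_const,
      Finset.card_univ, Fintype.card_fin, nsmul_eq_mul]
    push_cast
    ring
  simp only [Q]
  rw [hsum, add_smul_ones_apply]
  field_simp
  ring

lemma Q_eq_self_of_sum_zero (x : EuclideanSpace ℝ (Fin (n+1))) (h : ∑ i, x i = 0) :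
    Q x = x := by
  ext i
  simp [Q, h]

lemma Q_sub (x z : EuclideanSpace ℝ (Fin (n+1))) : Q (x - z) = Q x - Q z := by
  ext i
  simp only [Q, PiLp.sub_apply, Finset.sum_sub_distrib]
  ring

lemma inner_sumzero_smul_ones (a : EuclideanSpace ℝ (Fin (n+1))) (h : ∑ i, a i = 0) (c : ℝ) :
    ⟪a, c • (ones (n := n))⟫ = 0 := by
  simp only [PiLp.inner_apply, RCLike.inner_apply, conj_trivial, smul_ones_apply]
  rw [← Finset.mul_sum, h, mul_zero]

lemma pythago (a b : EuclideanSpace ℝ (Fin (n+1))) (h : ⟪a, b⟫ = 0) :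
    ‖a + b‖^2 = ‖a‖^2 + ‖b‖^2 := by
  rw [norm_add_sq_real, h]
  ring

/-- distance comparison transfers from the hyperplane to ambient space -/
lemma transfer (y u w : EuclideanSpace ℝ (Fin (n+1)))
    (h : ‖Q y - Q u‖ ≤ ‖Q y - Q w‖) :
    ‖y - Q u‖ ≤ ‖y - Q w‖ := by
  set c : ℝ := (∑ j, y j) / (n+1) with hc
  have hyd : ∀ v : EuclideanSpace ℝ (Fin (n+1)),
      y - Q v = (Q y - Q v) + c • ones := by
    intro v
    ext i
    simp [Q, PiLp.sub_apply, PiLp.add_apply, smul_ones_apply, hc]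
    ring
  have hsq : ∀ v : EuclideanSpace ℝ (Fin (n+1)),
      ‖y - Q v‖^2 = ‖Q y - Q v‖^2 + ‖c • (ones (n := n))‖^2 := by
    intro v
    rw [hyd v]
    refine pythago _ _ ?_
    refine inner_sumzero_smul_ones _ ?_ _
    have : ∑ i, (Q y - Q v) i = ∑ i, Q y i - ∑ i, Q v i := by
      simp [Finset.sum_sub_distrib]
    rw [this, sum_Q, sum_Q, sub_zero]
  have h2 : ‖y - Q u‖^2 ≤ ‖y - Q w‖^2 := by
    rw [hsq u, hsq w]
    have := sq_le_sq' (by linarith [norm_nonneg (Q y - Q u), norm_nonneg (Q y - Q w)]) h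
    linarith
  exact (abs_le_of_sq_le_sq' h2 (norm_nonneg _)).2

lemma norm_le_of_abs_le (a b : EuclideanSpace ℝ (Fin (n+1)))
    (h : ∀ i, |a i| ≤ |b i|) : ‖a‖ ≤ ‖b‖ := by
  rw [EuclideanSpace.norm_eq, EuclideanSpace.norm_eq]
  apply Real.sqrt_le_sqrt
  apply Finset.sum_le_sum
  intro i _
  have := h i
  simp only [Real.norm_eq_abs]
  exact pow_le_pow_left₀ (abs_nonneg _) this 2

lemma norm_Q_le (x : EuclideanSpace ℝ (Fin (n+1))) : ‖Q x‖ ≤ ‖x‖ := by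
  set c : ℝ := (∑ j, x j) / (n+1) with hc
  have hx : x = Q x + c • ones := by
    ext i
    simp [Q, PiLp.add_apply, smul_ones_apply, hc]
  have : ‖x‖^2 = ‖Q x‖^2 + ‖c • (ones (n := n))‖^2 := by
    conv_lhs => rw [hx]
    exact pythago _ _ (inner_sumzero_smul_ones _ (sum_Q x) c)
  nlinarith [norm_nonneg (Q x), norm_nonneg x, sq_nonneg ‖c • (ones (n := n))‖]

/-- round optimality coordinatewise -/
lemma roundVec_best (a b : EuclideanSpace ℝ (Fin (n+1))) (z : Fin (n+1) → ℤ)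
    (hb : ∀ i, b i = (z i : ℝ)) :
    ‖a - roundVec a‖ ≤ ‖a - b‖ := by
  apply norm_le_of_abs_le
  intro i
  have h := round_le (a i) (z i)
  simp only [PiLp.sub_apply, roundVec, hb i]
  exact h

/-- For each integer vector k there is lam ∈ [0,1) beating Q k in the hyperplane. -/
lemma per_k (y : EuclideanSpace ℝ (Fin (n+1))) (k : Fin (n+1) → ℤ) :
    ∃ lam ∈ Set.Ico (0:ℝ) 1,
      ‖Q y - Q (roundVec (y + lam • ones))‖ ≤ ‖Q y - Q (WithLp.toLp 2 (fun i => (k i : ℝ)))‖ := by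
  set kR : EuclideanSpace ℝ (Fin (n+1)) := WithLp.toLp 2 (fun i => (k i : ℝ)) with hkR
  set μ : ℝ := (∑ i, (y i - kR i)) / (n+1) with hμ
  set m : ℤ := ⌈μ⌉ with hm
  set lam : ℝ := (m : ℝ) - μ with hlam
  have hlam0 : 0 ≤ lam := by
    have := Int.le_ceil μ
    simp [hlam]
    exact this
  have hlam1 : lam < 1 := by
    have := Int.ceil_lt_add_one μ
    simp [hlam]
    linarith
  refine ⟨lam, ⟨hlam0, hlam1⟩, ?_⟩
  have hne : (((n : ℝ) + 1)) ≠ 0 := by positivity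
  -- v := (y + lam • ones) - (kR + m • ones)  has zero sum
  set v : EuclideanSpace ℝ (Fin (n+1)) :=
    (y + lam • ones) - (kR + (m : ℝ) • ones) with hv
  have hsumv : ∑ i, v i = 0 := by
    have : ∀ i, v i = (y i - kR i) - μ := by
      intro i
      simp [hv, PiLp.sub_apply, add_smul_ones_apply, hlam]
      ring
    rw [Finset.sum_congr rfl (fun i _ => this i)]
    rw [Finset.sum_sub_distrib, Finset.sum_const, Finset.card_univ, Fintype.card_fin,
      nsmul_eq_mul, hμ]
    push_cast
    field_simp
    ring
  -- Q (y - kR) = v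
  have hQv : Q (y - kR) = v := by
    have h1 : Q v = v := Q_eq_self_of_sum_zero v hsumv
    have h2 : Q v = Q (y - kR) := by
      have : v = (y - kR) + (lam - (m : ℝ)) • ones := by
        ext i
        simp [hv, PiLp.sub_apply, PiLp.add_apply, add_smul_ones_apply, smul_ones_apply]
        ring
      rw [this, Q_add_smul_ones]
    rw [← h2, h1]
  have key1 : ‖Q y - Q kR‖ = ‖v‖ := by
    rw [← Q_sub, hQv]
  rw [key1]
  -- v = (y + lam • ones) - integer vector (kR + m • ones)
  have step1 : ‖(y + lam • ones) - roundVec (y + lam • ones)‖ ≤ ‖v‖ := by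
    rw [hv]
    refine roundVec_best (y + lam • (ones (n := n))) (kR + (m : ℝ) • ones)
      (fun i => k i + m) ?_
    intro i
    simp only [PiLp.add_apply, smul_ones_apply, hkR]
    push_cast
    ring
  have step2 : ‖Q y - Q (roundVec (y + lam • ones))‖
      ≤ ‖(y + lam • ones) - roundVec (y + lam • ones)‖ := by
    have hQy : Q (y + lam • ones) = Q y := Q_add_smul_ones y lam
    calc ‖Q y - Q (roundVec (y + lam • ones))‖
        = ‖Q ((y + lam • ones) - roundVec (y + lam • ones))‖ := by
          rw [Q_sub, hQy]
      _ ≤ ‖(y + lam • ones) - roundVec (y + lam • ones)‖ := norm_Q_le _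
  linarith

end Aux

/-- There exists `λ ∈ [0,1)` such that `Q ⌊y + λ·1⌉` is a closest point
in `A_n*` to `y`. -/
theorem exists_lambda_Ico_closest (n : ℕ) (y : EuclideanSpace ℝ (Fin (n+1))) :
    ∃ lam ∈ Set.Ico (0 : ℝ) 1,
      ∀ w ∈ Anstar n, ‖y - Q (roundVec (y + lam • ones))‖ ≤ ‖y - w‖ := by
  classical
  -- the function we minimize
  set f : ℝ → ℝ := fun lam => ‖y - Q (roundVec (y + lam • ones))‖ with hf
  -- finite candidate set of values
  set V : Finset ℝ := (Fintype.piFinset (fun i => ({round (y i), round (y i) + 1} : Finset ℤ))).image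
      (fun r => ‖y - Q (WithLp.toLp 2 (fun i => ((r i : ℤ) : ℝ)))‖) with hV
  have hmem : ∀ lam ∈ Set.Ico (0:ℝ) 1, f lam ∈ V := by
    intro lam hlam
    have hr : ∀ i, round (y i + lam) = round (y i)
        ∨ round (y i + lam) = round (y i) + 1 := by
      intro i
      have h1 : round (y i) ≤ round (y i + lam) := by
        rw [round_eq, round_eq]
        exact Int.floor_mono (by linarith [hlam.1])
      have h2 : round (y i + lam) ≤ round (y i) + 1 := by
        have h4 : round (y i + lam) ≤ round (y i + 1) := by
          rw [round_eq, round_eq]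
          exact Int.floor_mono (by linarith [hlam.2])
        have h3 : round (y i + (1:ℝ)) = round (y i) + 1 := by
          have := round_add_intCast (y i) 1
          simpa using this
        omega
      omega
    rw [hV]
    apply Finset.mem_image.mpr
    refine ⟨fun i => round (y i + lam), ?_, ?_⟩
    · apply Fintype.mem_piFinset.mpr
      intro i
      rcases hr i with h | h <;> simp [h]
    · have heq : roundVec (y + lam • ones) =
          WithLp.toLp 2 (fun i => ((round (y i + lam) : ℤ) : ℝ)) := by
        ext i
        have happ : (y + lam • (ones (n := n))) i = y i + lam := add_smul_ones_apply y lam i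
        simp only [roundVec, happ]
      rw [hf]
      simp only [heq]
  -- the set of values attained on [0,1) is finite and nonempty
  set S : Set ℝ := f '' Set.Ico 0 1 with hS
  have hSfin : S.Finite := Set.Finite.subset (V.finite_toSet) (by
    rintro x ⟨lam, hlam, rfl⟩
    exact hmem lam hlam)
  have hSne : S.Nonempty := ⟨f 0, ⟨0, ⟨le_refl _, zero_lt_one⟩, rfl⟩⟩
  obtain ⟨a, haS, hamin⟩ := Set.exists_min_image S id hSfin hSne
  obtain ⟨lam, hlamIco, hfa⟩ := haS
  refine ⟨lam, hlamIco, ?_⟩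
  rintro w ⟨k, rfl⟩
  obtain ⟨lam', hlam'Ico, hle⟩ := per_k y k
  have h1 : f lam ≤ f lam' := by
    have hmem' : f lam' ∈ S := ⟨lam', hlam'Ico, rfl⟩
    have := hamin (f lam') hmem'
    simp only [id] at this
    rw [hfa]
    exact this
  have h2 : f lam' ≤ ‖y - Q (WithLp.toLp 2 (fun i => ((k i : ℤ) : ℝ)))‖ := by
    rw [hf]
    exact transfer y (roundVec (y + lam' • ones)) (WithLp.toLp 2 (fun i => ((k i : ℤ) : ℝ))) hle
  calc f lam ≤ f lam' := h1
    _ ≤ _ := h2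
end

section
/- Let y ∈ ℝ^{n+1} have its centered fractional parts sorted in descending order: {y_1} ≥ {y_2} ≥ … ≥ {y_{n+1}}. Then there exists m ∈ {0, 1, …, n} such that Q(⌊y⌉ + Σ_{i=1}^{m} e_i) is a closest point in A_n* to y, where e_i denotes the i-th standard basis vector of ℝ^{n+1}. -/
/-- The centered fractional part `{t} = t - ⌊t⌉ ∈ [-1/2, 1/2)`. -/
noncomputable def fract (t : ℝ) : ℝ := t - round t

/-- `∑_{i=1}^{m} e_i`: the sum of the first `m` standard basis vectors of `ℝ^{n+1}`. -/
noncomputable def basisSum (n : ℕ) (m : ℕ) : EuclideanSpace ℝ (Fin (n+1)) :=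
  ∑ i ∈ Finset.univ.filter (fun i : Fin (n+1) => (i : ℕ) < m),
    EuclideanSpace.single i (1 : ℝ)

/- ## Auxiliary lemmas -/

lemma pt0 (u : ℤ) (z c : ℝ) (h1 : c ≤ 1 - 2*z) (h2 : -1 - 2*z ≤ c) :
    z^2 + c*(u:ℝ) ≤ (z - u)^2 := by
  have hcase : u ≤ -1 ∨ u = 0 ∨ 1 ≤ u := by omega
  rcases hcase with h | h | h
  · have hu : (u:ℝ) ≤ -1 := by exact_mod_cast h
    nlinarith [mul_nonneg (by linarith : (0:ℝ) ≤ -(u:ℝ))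
      (by linarith : (0:ℝ) ≤ -((u:ℝ) - 2*z - c))]
  · subst h; norm_num
  · have hu : (1:ℝ) ≤ (u:ℝ) := by exact_mod_cast h
    nlinarith [mul_nonneg (by linarith : (0:ℝ) ≤ (u:ℝ))
      (by linarith : (0:ℝ) ≤ (u:ℝ) - 2*z - c)]

lemma int_fact (u : ℤ) : (0:ℝ) ≤ ((u:ℝ)-1)*((u:ℝ)-2) := by
  have : (0:ℤ) ≤ (u-1)*(u-2) := by
    rcases le_or_gt u 1 with h | h
    · exact mul_nonneg_of_nonpos_of_nonpos (by omega) (by omega)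
    · exact mul_nonneg (by omega) (by omega)
  exact_mod_cast this

lemma pt1 (u : ℤ) (z c : ℝ) (h1 : 1 - 2*z ≤ c) (h2 : c ≤ 3 - 2*z) :
    (z - 1)^2 + c*((u:ℝ) - 1) ≤ (z - u)^2 := by
  rcases le_or_gt u 0 with h | h
  · have hu : (u:ℝ) ≤ 0 := by exact_mod_cast h
    nlinarith [mul_nonneg (by linarith : (0:ℝ) ≤ 1 - (u:ℝ))
      (by linarith : (0:ℝ) ≤ 2*z + c - (u:ℝ) - 1)]
  · have hu : (1:ℝ) ≤ (u:ℝ) := by exact_mod_cast h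
    nlinarith [int_fact u, mul_nonneg (by linarith : (0:ℝ) ≤ (u:ℝ) - 1)
      (by linarith : (0:ℝ) ≤ 3 - 2*z - c)]

/-- The squared norm of the projection `Q d`, as a quadratic form. -/
noncomputable def Gq (n : ℕ) (d : Fin (n+1) → ℝ) : ℝ :=
  ∑ i, d i^2 - (∑ i, d i)^2/(n+1)

lemma expand (n : ℕ) (d : Fin (n+1) → ℝ) (c : ℝ) :
    ∑ i, (d i + c)^2 = ∑ i, d i^2 + 2*c*(∑ i, d i) + (n+1)*c^2 := by
  have h : ∀ i : Fin (n+1), (d i + c)^2 = d i^2 + 2*c*d i + c^2 := fun i => by ring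
  simp_rw [h]
  rw [Finset.sum_add_distrib, Finset.sum_add_distrib, ← Finset.mul_sum,
    Finset.sum_const, Finset.card_univ, Fintype.card_fin, nsmul_eq_mul]
  push_cast; ring

lemma sum_shift (n : ℕ) (d : Fin (n+1) → ℝ) (c : ℝ) :
    ∑ i, (d i + c) = ∑ i, d i + (n+1)*c := by
  rw [Finset.sum_add_distrib, Finset.sum_const, Finset.card_univ, Fintype.card_fin,
    nsmul_eq_mul]
  push_cast; ring

lemma Gq_invar (n : ℕ) (d : Fin (n+1) → ℝ) (c : ℝ) :
    Gq n (fun i => d i + c) = Gq n d := by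
  have hne : ((n:ℝ)+1) ≠ 0 := by positivity
  rw [Gq, Gq, expand, sum_shift]
  field_simp
  ring

lemma sum_sq_eq (n : ℕ) (y v : Fin (n+1) → ℝ) :
    ∑ i, (y i - (v i - (∑ j, v j)/(n+1)))^2
      = Gq n (fun i => y i - v i) + (∑ i, y i)^2/(n+1) := by
  have hne : ((n:ℝ)+1) ≠ 0 := by positivity
  have h1 : ∀ i : Fin (n+1), y i - (v i - (∑ j, v j)/(n+1))
      = (y i - v i) + (∑ j, v j)/(n+1) := fun i => by ring
  simp_rw [h1]
  rw [expand]
  have h2 : ∑ i, v i = ∑ i, y i - ∑ i, (y i - v i) := by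
    rw [Finset.sum_sub_distrib]; ring
  rw [Gq, h2]
  field_simp
  ring

lemma sum_indicator (n m : ℕ) (hm : m ≤ n+1) :
    ∑ i : Fin (n+1), (if (i:ℕ) < m then (1:ℝ) else 0) = m := by
  rw [Fin.sum_univ_eq_sum_range (fun i => if i < m then (1:ℝ) else 0)]
  rw [Finset.sum_boole]
  have h : (Finset.range (n+1)).filter (fun i => i < m) = Finset.range m := by
    ext i; simp; omega
  rw [h, Finset.card_range]

/-- The key combinatorial inequality: among integer vectors with coordinate sum `m`,
the 0-1 indicator of the first `m` coordinates minimizes `∑ (z i - u i)^2` when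
`z` is sorted in descending order within `[-1/2, 1/2]`. -/
lemma core (n m : ℕ) (hm : m ≤ n) (z : Fin (n+1) → ℝ)
    (hz : ∀ i, |z i| ≤ 1/2)
    (hsorted : ∀ i j : Fin (n+1), i ≤ j → z j ≤ z i)
    (u : Fin (n+1) → ℤ) (hu : ∑ i, u i = (m:ℤ)) :
    ∑ i, (z i - (if (i:ℕ) < m then (1:ℝ) else 0))^2 ≤ ∑ i, (z i - (u i : ℝ))^2 := by
  set c : ℝ := if m = 0 then 0 else 1 - 2 * z ⟨m - 1, by omega⟩ with hc
  have key : ∀ i : Fin (n+1),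
      (z i - (if (i:ℕ) < m then (1:ℝ) else 0))^2
        + c * ((u i : ℝ) - (if (i:ℕ) < m then (1:ℝ) else 0)) ≤ (z i - u i)^2 := by
    intro i
    have hzi := abs_le.1 (hz i)
    by_cases hi : (i:ℕ) < m
    · have hm0 : m ≠ 0 := by omega
      simp only [if_pos hi, hc, if_neg hm0]
      set j : Fin (n+1) := ⟨m-1, by omega⟩ with hj
      have hij : i ≤ j := by
        rw [Fin.le_def]; simp [hj]; omega
      have h1 : z j ≤ z i := hsorted i j hij
      have hzj := abs_le.1 (hz j)
      exact pt1 (u i) (z i) _ (by linarith) (by linarith)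
    · simp only [if_neg hi]
      by_cases hm0 : m = 0
      · simp only [hc, if_pos hm0]
        have := pt0 (u i) (z i) 0 (by linarith) (by linarith)
        simpa using this
      · simp only [hc, if_neg hm0]
        set j : Fin (n+1) := ⟨m-1, by omega⟩ with hj
        have hji : j ≤ i := by
          rw [Fin.le_def]; simp [hj]; omega
        have h1 : z i ≤ z j := hsorted j i hji
        have hzj := abs_le.1 (hz j)
        have := pt0 (u i) (z i) (1 - 2 * z j) (by linarith) (by linarith)
        simpa using this
  have hsum := Finset.sum_le_sum (fun i (_ : i ∈ Finset.univ) => key i)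
  rw [Finset.sum_add_distrib] at hsum
  have h2 : ∑ i : Fin (n+1), c * ((u i:ℝ) - (if (i:ℕ) < m then (1:ℝ) else 0)) = 0 := by
    rw [← Finset.mul_sum, Finset.sum_sub_distrib, sum_indicator n m (by omega)]
    have h3 : ∑ i, ((u i : ℝ)) = (m:ℝ) := by
      have := congrArg (fun x : ℤ => (x:ℝ)) hu
      push_cast at this
      simpa using this
    rw [h3]
    ring
  rw [h2, add_zero] at hsum
  exact hsum

lemma normsq_eq (n : ℕ) (x : EuclideanSpace ℝ (Fin (n+1))) :
    ‖x‖^2 = ∑ i, (x i)^2 := by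
  rw [EuclideanSpace.norm_eq, Real.sq_sqrt (by positivity)]
  simp [sq_abs]

lemma basisSum_apply (n m : ℕ) (i : Fin (n+1)) :
    basisSum n m i = if (i:ℕ) < m then (1:ℝ) else 0 := by
  unfold basisSum
  rw [WithLp.ofLp_sum, Finset.sum_apply]
  simp [EuclideanSpace.single_apply]

/-- Squared distance from `y` to `Q v` in terms of the quadratic form `Gq`. -/
lemma dist_sq_eq (n : ℕ) (y : EuclideanSpace ℝ (Fin (n+1))) (v : Fin (n+1) → ℝ) :
    ‖y - Q (WithLp.toLp 2 v)‖^2 = Gq n (fun i => y i - v i) + (∑ i, y i)^2/(n+1) := by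
  rw [normsq_eq]
  have h : ∀ i : Fin (n+1), (y - Q (WithLp.toLp 2 v)) i = y i - (v i - (∑ j, v j)/(n+1)) := fun i => rfl
  simp_rw [h]
  exact sum_sq_eq n (fun i => y i) v

/-- If the centered fractional parts of `y` are sorted in descending order, then
there exists `m ∈ {0,…,n}` such that `Q(⌊y⌉ + ∑_{i=1}^{m} e_i)` is a closest
point in `A_n*` to `y`. -/
theorem exists_m_closest (n : ℕ) (y : EuclideanSpace ℝ (Fin (n+1)))
    (hsort : ∀ i j : Fin (n+1), i ≤ j → fract (y j) ≤ fract (y i)) :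
    ∃ m ≤ n, Q (roundVec y + basisSum n m) ∈ Anstar n ∧
      ∀ w ∈ Anstar n, ‖y - Q (roundVec y + basisSum n m)‖ ≤ ‖y - w‖ := by
  classical
  set z : Fin (n+1) → ℝ := fun i => fract (y i) with hzdef
  have hz : ∀ i, |z i| ≤ 1/2 := fun i => abs_sub_round (y i)
  -- choose the minimizing m over {0, ..., n}
  obtain ⟨m, hmmem, hmin⟩ := Finset.exists_min_image (Finset.range (n+1))
    (fun m' => Gq n (fun i => z i - (if (i:ℕ) < m' then (1:ℝ) else 0))) ⟨0, by simp⟩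
  have hm : m ≤ n := by have := Finset.mem_range.1 hmmem; omega
  refine ⟨m, hm, ?_, ?_⟩
  · refine ⟨fun i => round (y i) + (if (i:ℕ) < m then 1 else 0), ?_⟩
    have hv : (roundVec y + basisSum n m)
        = WithLp.toLp 2 (fun i => (((fun i : Fin (n+1) => round (y i) + (if (i:ℕ) < m then 1 else 0)) i : ℤ) : ℝ)) := by
      ext i
      show roundVec y i + basisSum n m i = _
      rw [basisSum_apply]
      simp only [roundVec]
      push_cast
      by_cases hi : (i:ℕ) < m <;> simp [hi]
    exact congrArg Q hv
  · intro w hw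
    obtain ⟨k, rfl⟩ := hw
    -- squared distance of candidate
    have hcand : ‖y - Q (roundVec y + basisSum n m)‖^2
        = Gq n (fun i => z i - (if (i:ℕ) < m then (1:ℝ) else 0)) + (∑ i, y i)^2/(n+1) := by
      rw [dist_sq_eq]
      congr 1
      apply congrArg
      funext i
      have : (roundVec y + basisSum n m) i = roundVec y i + basisSum n m i := rfl
      rw [this, basisSum_apply]
      simp only [roundVec, hzdef, fract]
      ring
    have hwdist : ‖y - Q (WithLp.toLp 2 (fun i => ((k i : ℝ))))‖^2
        = Gq n (fun i => y i - k i) + (∑ i, y i)^2/(n+1) := dist_sq_eq n y _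
    -- reduce the arbitrary lattice point
    set t : Fin (n+1) → ℤ := fun i => round (y i) - k i with ht
    set T : ℤ := ∑ i, t i with hT
    set c : ℤ := (-T) / (n+1) with hcdef
    set mw : ℤ := (-T) % (n+1) with hmw
    have hmw0 : 0 ≤ mw := Int.emod_nonneg _ (by omega)
    have hmwlt : mw < n+1 := by
      have := Int.emod_lt_of_pos (-T) (show (0:ℤ) < (n:ℤ)+1 by omega)
      exact_mod_cast this
    set mw' : ℕ := mw.toNat with hmw'
    have hmw'n : mw' ≤ n := by omega
    set u : Fin (n+1) → ℤ := fun i => -c - t i with hudef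
    have hsumu : ∑ i, u i = (mw' : ℤ) := by
      have h1 : ∑ i, u i = ((n:ℤ)+1) * (-c) - T := by
        rw [hudef]
        rw [Finset.sum_sub_distrib, Finset.sum_const, Finset.card_univ, Fintype.card_fin,
          nsmul_eq_mul, hT]
        push_cast
        ring
      have h2 : ((n:ℤ)+1) * c + mw = -T := by
        rw [hcdef, hmw]; exact Int.mul_ediv_add_emod _ _
      have h6 : ((n:ℤ)+1) * (-c) = -(((n:ℤ)+1) * c) := by ring
      rw [h1, h6]
      omega
    -- core inequality
    have hcore := core n mw' hmw'n z hz (fun i j h => hsort i j h) u hsumu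
    -- Gq comparison with equal coordinate sums
    have hGq1 : Gq n (fun i => z i - (if (i:ℕ) < mw' then (1:ℝ) else 0))
        ≤ Gq n (fun i => z i - (u i : ℝ)) := by
      have hs1 : ∑ i, (z i - (if (i:ℕ) < mw' then (1:ℝ) else 0))
          = ∑ i, (z i - (u i : ℝ)) := by
        rw [Finset.sum_sub_distrib, Finset.sum_sub_distrib, sum_indicator n mw' (by omega)]
        have h3 : ∑ i, ((u i : ℝ)) = (mw' : ℝ) := by
          have := congrArg (fun x : ℤ => (x:ℝ)) hsumu
          push_cast at this
          simpa using this
        rw [h3]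
      rw [Gq, Gq, hs1]
      exact sub_le_sub_right hcore _
    -- translation invariance
    have hGq2 : Gq n (fun i => z i - (u i : ℝ)) = Gq n (fun i => y i - k i) := by
      have h4 : (fun i => z i - (u i : ℝ)) = fun i => (y i - (k i : ℝ)) + (c : ℝ) := by
        funext i
        simp only [hudef, hzdef, fract, ht]
        push_cast
        ring
      rw [h4, Gq_invar]
    -- minimality of m
    have hmle : Gq n (fun i => z i - (if (i:ℕ) < m then (1:ℝ) else 0))
        ≤ Gq n (fun i => z i - (if (i:ℕ) < mw' then (1:ℝ) else 0)) :=
      hmin mw' (Finset.mem_range.2 (by omega))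
    -- combine everything
    have hsq : ‖y - Q (roundVec y + basisSum n m)‖^2 ≤ ‖y - Q (WithLp.toLp 2 (fun i => ((k i : ℝ))))‖^2 := by
      rw [hcand, hwdist]
      have := le_trans hmle (le_trans hGq1 (le_of_eq hGq2))
      linarith
    have h7 := Real.sqrt_le_sqrt hsq
    rwa [Real.sqrt_sq (norm_nonneg _), Real.sqrt_sq (norm_nonneg _)] at h7
end
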